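/- Let c in (0,1), y>0, t>0. Define Delta(s) = (y/(y+t-s))^c - (y/(y+t))^c for s in (0,t). Then int_0^t Delta(s) s^{c-2} ds = (1/(1-c)) * ( t^c/(y+t) - t^{c-1}*(1 - (y/(y+t))^c) ). -/

import Mathlib

open MeasureTheory Real Set Filter Topology

lemma bern_aux {p a b : ℝ} (hp0 : 0 ≤ p) (hp1 : p ≤ 1) (hb : 0 < b) (hba : b ≤ a) :
    a ^ p ≤ b ^ p + p * b ^ (p - 1) * (a - b) := by
  have hq : (0:ℝ) ≤ (a - b) / b := div_nonneg (by linarith) hb.le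
  have hs : (-1 : ℝ) ≤ (a - b) / b := by linarith
  have h := rpow_one_add_le_one_add_mul_self hs hp0 hp1
  have ha : a = b * (1 + (a - b) / b) := by field_simp; ring
  have hbp : b ^ (p - 1) = b ^ p / b := by
    rw [Real.rpow_sub hb, Real.rpow_one]
  calc a ^ p = (b * (1 + (a - b) / b)) ^ p := by rw [← ha]
    _ = b ^ p * (1 + (a - b) / b) ^ p := Real.mul_rpow hb.le (by linarith)
    _ ≤ b ^ p * (1 + p * ((a - b) / b)) := by
        exact mul_le_mul_of_nonneg_left h (Real.rpow_nonneg hb.le p)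
    _ = b ^ p + p * b ^ (p - 1) * (a - b) := by rw [hbp]; field_simp

theorem stmt_5 (c y t : ℝ) (hc0 : 0 < c) (hc1 : c < 1) (hy : 0 < y) (ht : 0 < t) :
    ∫ s in Set.Ioo (0 : ℝ) t,
        ((y / (y + t - s)) ^ c - (y / (y + t)) ^ c) * s ^ (c - 2)
      = (1 / (1 - c)) *
        (t ^ c / (y + t) - t ^ (c - 1) * (1 - (y / (y + t)) ^ c)) := by
  have hyt : (0:ℝ) < y + t := by linarith
  have hc1' : c - 1 ≠ 0 := by linarith
  have hc1'' : (1:ℝ) - c ≠ 0 := by linarith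
  have hyt0 : y + t ≠ 0 := hyt.ne'
  set A : ℝ := y ^ c / (y + t) with hA
  set B : ℝ := (y / (y + t)) ^ c with hB
  set G : ℝ → ℝ := fun s =>
    (1 / (c - 1)) * (A * (y + t - s) ^ (1 - c) * s ^ (c - 1) - B * s ^ (c - 1)) with hGdef
  set f' : ℝ → ℝ := fun s => ((y / (y + t - s)) ^ c - B) * s ^ (c - 2) with hf'
  -- derivative
  have hderiv : ∀ s ∈ Ioo (0:ℝ) t, HasDerivAt G (f' s) s := by
    intro s hs
    obtain ⟨hs0, hst⟩ := hs
    have hu : (0:ℝ) < y + t - s := by linarith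
    have h1 : HasDerivAt (fun s : ℝ => y + t - s) (-1) s := by
      simpa using ((hasDerivAt_id s).const_sub (y + t))
    have h2 : HasDerivAt (fun s : ℝ => (y + t - s) ^ (1 - c))
        ((1 - c) * (y + t - s) ^ (1 - c - 1) * (-1)) s := by
      exact (Real.hasDerivAt_rpow_const (Or.inl hu.ne')).comp s h1
    have h3 : HasDerivAt (fun s : ℝ => s ^ (c - 1)) ((c - 1) * s ^ (c - 1 - 1)) s :=
      Real.hasDerivAt_rpow_const (Or.inl hs0.ne')
    have h4 := ((h2.const_mul A).mul h3).sub (h3.const_mul B)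
    have h5 := h4.const_mul (1 / (c - 1))
    refine h5.congr_deriv (Eq.symm ?_)
    have e1 : (y + t - s) ^ (1 - c) = (y + t - s) ^ (-c) * (y + t - s) := by
      rw [show (1 : ℝ) - c = -c + 1 by ring, Real.rpow_add_one hu.ne']
    have e2 : s ^ (c - 1) = s ^ (c - 2) * s := by
      rw [show c - 1 = c - 2 + 1 by ring, Real.rpow_add_one hs0.ne']
    have e3 : (y / (y + t - s)) ^ c = y ^ c * ((y + t - s) ^ c)⁻¹ := by
      rw [Real.div_rpow hy.le hu.le, div_eq_mul_inv]
    have e4 : (y + t - s) ^ (-c) = ((y + t - s) ^ c)⁻¹ := Real.rpow_neg hu.le c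
    have e5 : (y + t - s) ^ (1 - c - 1) = ((y + t - s) ^ c)⁻¹ := by
      rw [show (1:ℝ) - c - 1 = -c by ring, e4]
    have e6 : s ^ (c - 1 - 1) = s ^ (c - 2) := by rw [show c - 1 - 1 = c - 2 by ring]
    have hP : (y + t - s) ^ c ≠ 0 := by positivity
    show ((y / (y + t - s)) ^ c - B) * s ^ (c - 2) = _
    have hinv : (y + t) * (y + t)⁻¹ = 1 := mul_inv_cancel₀ hyt0
    rw [e3, e2, e1, e4, e5, e6]
    field_simp
    linear_combination (-(y ^ c * (c - 1))) * hinv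
  -- nonnegativity and upper bound on the integrand
  have hbd : ∀ s ∈ Ioo (0:ℝ) t,
      0 ≤ f' s ∧ f' s ≤ (c * (y / (y + t)) ^ (c - 1) / (y + t)) * s ^ (c - 1) := by
    intro s hs
    obtain ⟨hs0, hst⟩ := hs
    have hu : (0:ℝ) < y + t - s := by linarith
    have huy : y < y + t - s := by linarith
    have hble : y / (y + t) ≤ y / (y + t - s) := by
      apply div_le_div_of_nonneg_left hy.le hu; linarith
    have hb0 : (0:ℝ) < y / (y + t) := by positivity
    have hnn : 0 ≤ (y / (y + t - s)) ^ c - B := by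
      rw [hB]; exact sub_nonneg.2 (Real.rpow_le_rpow hb0.le hble hc0.le)
    constructor
    · apply mul_nonneg hnn (Real.rpow_nonneg hs0.le _)
    · have key := bern_aux hc0.le hc1.le hb0 hble
      have hdiff : y / (y + t - s) - y / (y + t) ≤ s / (y + t) := by
        rw [div_sub_div _ _ hu.ne' hyt.ne']
        rw [div_le_div_iff₀ (by positivity) hyt]
        have : y * (y + t) - (y + t - s) * y = y * s := by ring
        rw [this]
        nlinarith [mul_nonneg (sub_nonneg.2 huy.le) (mul_nonneg hs0.le hyt.le)]
      have hbpow : (0:ℝ) ≤ c * (y / (y + t)) ^ (c - 1) := by positivity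
      have h6 : (y / (y + t - s)) ^ c - B ≤ c * (y / (y + t)) ^ (c - 1) * (s / (y + t)) := by
        rw [hB]
        calc (y / (y + t - s)) ^ c - (y / (y + t)) ^ c
            ≤ c * (y / (y + t)) ^ (c - 1) * (y / (y + t - s) - y / (y + t)) := by linarith
          _ ≤ c * (y / (y + t)) ^ (c - 1) * (s / (y + t)) :=
              mul_le_mul_of_nonneg_left hdiff hbpow
      have e2 : s ^ (c - 1) = s ^ (c - 2) * s := by
        rw [show c - 1 = c - 2 + 1 by ring, Real.rpow_add_one hs0.ne']
      have hsp : (0:ℝ) ≤ s ^ (c - 2) := Real.rpow_nonneg hs0.le _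
      calc f' s ≤ (c * (y / (y + t)) ^ (c - 1) * (s / (y + t))) * s ^ (c - 2) :=
            mul_le_mul_of_nonneg_right h6 hsp
        _ = (c * (y / (y + t)) ^ (c - 1) / (y + t)) * s ^ (c - 1) := by
            rw [e2]; ring
  -- integrability
  have hint : IntervalIntegrable f' volume 0 t := by
    rw [intervalIntegrable_iff_integrableOn_Ioo_of_le ht.le]
    have hg : IntegrableOn
        (fun s : ℝ => (c * (y / (y + t)) ^ (c - 1) / (y + t)) * s ^ (c - 1)) (Ioo 0 t) := by
      have := (intervalIntegral.intervalIntegrable_rpow' (r := c - 1) (by linarith)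
          (a := 0) (b := t)).const_mul (c * (y / (y + t)) ^ (c - 1) / (y + t))
      rwa [intervalIntegrable_iff_integrableOn_Ioo_of_le ht.le] at this
    apply hg.integrable.mono'
    · have hcont : ContinuousOn f' (Ioo (0:ℝ) t) := by
        apply ContinuousOn.mul
        · apply ContinuousOn.sub _ continuousOn_const
          apply ContinuousOn.rpow_const
          · apply ContinuousOn.div continuousOn_const (by fun_prop)
            intro s hs
            have : (0:ℝ) < y + t - s := by linarith [hs.2]
            exact this.ne'
          · exact fun s hs => Or.inr hc0.le
        · exact fun s hs =>
            (Real.continuousAt_rpow_const s (c - 2) (Or.inl (ne_of_gt hs.1))).continuousWithinAt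
      exact hcont.aestronglyMeasurable measurableSet_Ioo
    · rw [ae_restrict_iff' measurableSet_Ioo]
      filter_upwards with s hs
      rw [Real.norm_eq_abs, abs_of_nonneg (hbd s hs).1]
      exact (hbd s hs).2
  -- limit at 0
  have hGeq : ∀ s : ℝ, G s = (A / (c - 1)) * (s ^ (c - 1) *
      ((y + t - s) ^ (1 - c) - (y + t) ^ (1 - c))) := by
    intro s
    have hBA : B = A * (y + t) ^ (1 - c) := by
      have h1 : (y + t) ^ c * (y + t) ^ (1 - c) = y + t := by
        rw [← Real.rpow_add hyt]; norm_num
      have h2 : (y + t) ^ c ≠ 0 := by positivity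
      rw [hB, hA, Real.div_rpow hy.le hyt.le]
      field_simp
      linear_combination (-1) * h1
    rw [hGdef, hBA]; ring
  have h0 : Tendsto G (𝓝[>] (0:ℝ)) (𝓝 0) := by
    have hub : ∀ s ∈ Ioo (0:ℝ) t,
        G s ≤ (A / (1 - c)) * ((1 - c) * y ^ (-c)) * s ^ c ∧ 0 ≤ G s := by
      intro s hs
      obtain ⟨hs0, hst⟩ := hs
      have hu : (0:ℝ) < y + t - s := by linarith
      have huy : y < y + t - s := by linarith
      have hmono : (y + t - s) ^ (1 - c) ≤ (y + t) ^ (1 - c) :=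
        Real.rpow_le_rpow hu.le (by linarith) (by linarith)
      have key := bern_aux (p := 1 - c) (a := y + t) (b := y + t - s)
        (by linarith) (by linarith) hu (by linarith)
      have hexp : (y + t - s) ^ (1 - c - 1) ≤ y ^ (-c) := by
        rw [show (1:ℝ) - c - 1 = -c by ring]
        exact Real.rpow_le_rpow_of_nonpos hy huy.le (by linarith)
      have hdd : (y + t) - (y + t - s) = s := by ring
      have hbound : (y + t) ^ (1 - c) - (y + t - s) ^ (1 - c) ≤ (1 - c) * y ^ (-c) * s := by
        rw [hdd] at key
        have h7 : (1 - c) * (y + t - s) ^ (1 - c - 1) * s ≤ (1 - c) * y ^ (-c) * s := by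
          apply mul_le_mul_of_nonneg_right _ hs0.le
          apply mul_le_mul_of_nonneg_left hexp (by linarith)
        linarith
      have hA0 : 0 ≤ A / (1 - c) := by
        apply div_nonneg _ (by linarith); rw [hA]; positivity
      have hsc : s ^ (c - 1) * s = s ^ c := by
        rw [← Real.rpow_add_one hs0.ne' (c - 1)]; ring_nf
      constructor
      · rw [hGeq s]
        have : (A / (c - 1)) * (s ^ (c - 1) *
            ((y + t - s) ^ (1 - c) - (y + t) ^ (1 - c)))
            = (A / (1 - c)) * (s ^ (c - 1) *
            ((y + t) ^ (1 - c) - (y + t - s) ^ (1 - c))) := by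
          field_simp; ring
        rw [this]
        calc (A / (1 - c)) * (s ^ (c - 1) *
              ((y + t) ^ (1 - c) - (y + t - s) ^ (1 - c)))
            ≤ (A / (1 - c)) * (s ^ (c - 1) * ((1 - c) * y ^ (-c) * s)) := by
              apply mul_le_mul_of_nonneg_left _ hA0
              apply mul_le_mul_of_nonneg_left hbound (Real.rpow_nonneg hs0.le _)
          _ = (A / (1 - c)) * ((1 - c) * y ^ (-c)) * s ^ c := by
              rw [← hsc]; ring
      · rw [hGeq s]
        have h8 : A / (c - 1) ≤ 0 := by
          apply div_nonpos_of_nonneg_of_nonpos _ (by linarith)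
          rw [hA]; positivity
        have h9 : s ^ (c - 1) * ((y + t - s) ^ (1 - c) - (y + t) ^ (1 - c)) ≤ 0 :=
          mul_nonpos_of_nonneg_of_nonpos (Real.rpow_nonneg hs0.le _) (by linarith)
        nlinarith [mul_nonneg (neg_nonneg.2 h8) (neg_nonneg.2 h9)]
    have hmem : Ioo (0:ℝ) t ∈ 𝓝[>] (0:ℝ) := Ioo_mem_nhdsGT_of_mem ⟨le_refl _, ht⟩
    have htop : Tendsto (fun s : ℝ => (A / (1 - c)) * ((1 - c) * y ^ (-c)) * s ^ c)
        (𝓝[>] (0:ℝ)) (𝓝 0) := by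
      have hbase : Tendsto (fun s : ℝ => s ^ c) (𝓝[>] (0:ℝ)) (𝓝 0) := by
        have h5 : Tendsto (fun s : ℝ => s ^ c) (𝓝 0) (𝓝 ((0:ℝ) ^ c)) :=
          Real.continuousAt_rpow_const 0 c (Or.inr hc0.le)
        rw [Real.zero_rpow hc0.ne'] at h5
        exact h5.mono_left nhdsWithin_le_nhds
      simpa using hbase.const_mul ((A / (1 - c)) * ((1 - c) * y ^ (-c)))
    apply squeeze_zero'
    · filter_upwards [hmem] with s hs using (hub s hs).2
    · filter_upwards [hmem] with s hs using (hub s hs).1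
    · exact htop
  -- limit at t
  have hT : Tendsto G (𝓝[<] t) (𝓝 (G t)) := by
    have hcA : ContinuousAt G t := by
      have h1 : ContinuousAt (fun s : ℝ => (y + t - s) ^ (1 - c)) t := by
        have : ContinuousAt (fun x : ℝ => x ^ (1 - c)) (y + t - t) :=
          Real.continuousAt_rpow_const _ _ (Or.inl (by simp; linarith))
        exact this.comp (by fun_prop)
      have h2 : ContinuousAt (fun s : ℝ => s ^ (c - 1)) t :=
        Real.continuousAt_rpow_const _ _ (Or.inl ht.ne')
      rw [hGdef]
      exact (((h1.const_mul A).mul h2).sub (h2.const_mul B)).const_mul _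
    exact hcA.continuousWithinAt
  have hFTC := intervalIntegral.integral_eq_sub_of_hasDerivAt_of_tendsto ht hderiv hint h0 hT
  rw [intervalIntegral.integral_of_le ht.le, MeasureTheory.integral_Ioc_eq_integral_Ioo] at hFTC
  have hgoal : (∫ s in Set.Ioo (0:ℝ) t, ((y / (y + t - s)) ^ c - B) * s ^ (c - 2))
      = G t - 0 := hFTC
  rw [hgoal]
  -- final algebra
  show (1 / (c - 1)) * (A * (y + t - t) ^ (1 - c) * t ^ (c - 1) - B * t ^ (c - 1)) - 0
      = (1 / (1 - c)) * (t ^ c / (y + t) - t ^ (c - 1) * (1 - B))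
  have e2 : A * y ^ (1 - c) = y / (y + t) := by
    rw [hA, div_mul_eq_mul_div, ← Real.rpow_add hy, show c + (1 - c) = 1 by ring,
      Real.rpow_one]
  have e3 : t ^ (c - 1) * t = t ^ c := by
    rw [← Real.rpow_add_one ht.ne' (c - 1)]; ring_nf
  rw [show y + t - t = y by ring, e2, ← e3]
  field_simp
  ring
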